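/- arXiv:0901.2118 — 3 statements merged into one kernel-verified Lean document; each statement's English description precedes it below -/
import Mathlib

section
/- Let Φ₀, Φ₁ be channels from m×m matrices to k×k matrices and let σ be a separable bipartite state on ℂ^m ⊗ ℂ^n. Then ‖((Φ₀ − Φ₁) ⊗ id_n)[σ]‖_tr ≤ sup { ‖Φ₀[τ] − Φ₁[τ]‖_tr : τ a state on ℂ^m }. -/
open scoped Kronecker ComplexOrder Matrix

namespace ChannelDiscrimination

/-- The trace norm `Tr √(Aᴴ A)` of a complex square matrix. -/
noncomputable def traceNorm {ι : Type*} [Fintype ι] [DecidableEq ι]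
    (A : Matrix ι ι ℂ) : ℝ :=
  ((Matrix.posSemidef_conjTranspose_mul_self A).1.eigenvectorUnitary.1 *
    Matrix.diagonal (((↑) : ℝ → ℂ) ∘ (√·) ∘ (Matrix.posSemidef_conjTranspose_mul_self A).1.eigenvalues) *
    (star (Matrix.posSemidef_conjTranspose_mul_self A).1.eigenvectorUnitary :
      Matrix ι ι ℂ)).trace.re

/-- A state: a positive semidefinite matrix of trace one. -/
def IsState {ι : Type*} [Fintype ι] (ρ : Matrix ι ι ℂ) : Prop :=
  ρ.PosSemidef ∧ ρ.trace = 1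

/-- Separability of a bipartite matrix on `ℂ^m ⊗ ℂ^n`. -/
def IsSeparable {m n : ℕ} (σ : Matrix (Fin m × Fin n) (Fin m × Fin n) ℂ) : Prop :=
  ∃ (N : ℕ) (p : Fin N → ℝ) (ρ : Fin N → Matrix (Fin m) (Fin m) ℂ)
    (τ : Fin N → Matrix (Fin n) (Fin n) ℂ),
    (∀ i, 0 ≤ p i) ∧ (∑ i, p i = 1) ∧ (∀ i, IsState (ρ i)) ∧ (∀ i, IsState (τ i)) ∧
    σ = ∑ i, (p i : ℂ) • (ρ i ⊗ₖ τ i)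

/-- `Φ ⊗ id_n` for a super-operator `Φ` from `m×m` to `k×k` matrices. -/
def tensorId {m k : ℕ} (n : ℕ)
    (Φ : Matrix (Fin m) (Fin m) ℂ →ₗ[ℂ] Matrix (Fin k) (Fin k) ℂ) :
    Matrix (Fin m × Fin n) (Fin m × Fin n) ℂ →ₗ[ℂ]
      Matrix (Fin k × Fin n) (Fin k × Fin n) ℂ where
  toFun M := Matrix.of fun p q => Φ (Matrix.of fun i j => M (i, p.2) (j, q.2)) p.1 q.1
  map_add' M N := by
    ext p q
    show Φ ((Matrix.of fun i j => M (i, p.2) (j, q.2)) +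
        (Matrix.of fun i j => N (i, p.2) (j, q.2))) p.1 q.1 = _
    rw [map_add]
    rfl
  map_smul' c M := by
    ext p q
    show Φ (c • (Matrix.of fun i j => M (i, p.2) (j, q.2))) p.1 q.1 = _
    rw [map_smul]
    rfl

/-- A positive super-operator. -/
def IsPositiveMap {m k : ℕ}
    (Φ : Matrix (Fin m) (Fin m) ℂ →ₗ[ℂ] Matrix (Fin k) (Fin k) ℂ) : Prop :=
  ∀ X : Matrix (Fin m) (Fin m) ℂ, X.PosSemidef → (Φ X).PosSemidef

/-- A trace-preserving super-operator. -/
def IsTracePreserving {m k : ℕ}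
    (Φ : Matrix (Fin m) (Fin m) ℂ →ₗ[ℂ] Matrix (Fin k) (Fin k) ℂ) : Prop :=
  ∀ X : Matrix (Fin m) (Fin m) ℂ, (Φ X).trace = X.trace

/-- A completely positive super-operator: `Φ ⊗ id_n` is positive for every `n`. -/
def IsCompletelyPositive {m k : ℕ}
    (Φ : Matrix (Fin m) (Fin m) ℂ →ₗ[ℂ] Matrix (Fin k) (Fin k) ℂ) : Prop :=
  ∀ (n : ℕ) (M : Matrix (Fin m × Fin n) (Fin m × Fin n) ℂ),
    M.PosSemidef → (tensorId n Φ M).PosSemidef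

/-- A (quantum) channel: completely positive and trace-preserving. -/
def IsChannel {m k : ℕ}
    (Φ : Matrix (Fin m) (Fin m) ℂ →ₗ[ℂ] Matrix (Fin k) (Fin k) ℂ) : Prop :=
  IsCompletelyPositive Φ ∧ IsTracePreserving Φ

/-- An entanglement-breaking channel. -/
def IsEntanglementBreaking {m k : ℕ}
    (Φ : Matrix (Fin m) (Fin m) ℂ →ₗ[ℂ] Matrix (Fin k) (Fin k) ℂ) : Prop :=
  IsChannel Φ ∧ ∀ (n : ℕ) (ρ : Matrix (Fin m × Fin n) (Fin m × Fin n) ℂ),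
    IsState ρ → IsSeparable (tensorId n Φ ρ)

/-- `pad1 M c` is the `(k+1)×(k+1)` matrix with `M` as its top-left `k×k` block,
`c` in the bottom-right corner, and zeros elsewhere. -/
def pad1 {k : ℕ} (M : Matrix (Fin k) (Fin k) ℂ) (c : ℂ) :
    Matrix (Fin (k + 1)) (Fin (k + 1)) ℂ :=
  Matrix.of fun a b =>
    Fin.lastCases (Fin.lastCases c (fun _ => 0) b)
      (fun i => Fin.lastCases 0 (fun j => M i j) b) a

/-- Partial transpose on the first tensor factor. -/
def ptransposeFst {d n : ℕ} (ρ : Matrix (Fin d × Fin n) (Fin d × Fin n) ℂ) :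
    Matrix (Fin d × Fin n) (Fin d × Fin n) ℂ :=
  Matrix.of fun p q => ρ (q.1, p.2) (p.1, q.2)

section Aux

variable {ι : Type*} [Fintype ι] [DecidableEq ι]

example (r : ℝ) : (RCLike.ofReal r : ℂ) = (r : ℂ) := rfl

open scoped MatrixOrder in
lemma traceNorm_eq_of_sq {A B : Matrix ι ι ℂ} (hB : B.PosSemidef)
    (h : B ^ 2 = Aᴴ * A) : traceNorm A = B.trace.re := by
  have h2 : B = CFC.sqrt (Aᴴ * A) :=
    (CFC.sqrt_unique (a := Aᴴ * A) (b := B) (by rw [← sq, h]) hB.nonneg).symm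
  rw [h2, CFC.sqrt_eq_real_sqrt _ (Matrix.posSemidef_conjTranspose_mul_self A).nonneg,
    cfcₙ_eq_cfc, (Matrix.posSemidef_conjTranspose_mul_self A).1.cfc_eq, Matrix.IsHermitian.cfc,
    Unitary.conjStarAlgAut_apply]
  rfl

/-- Conjugation of a real diagonal by the eigenvector unitary of `hX`. -/
noncomputable def specConj {X : Matrix ι ι ℂ} (hX : X.IsHermitian) (f : ι → ℝ) :
    Matrix ι ι ℂ :=
  (hX.eigenvectorUnitary : Matrix ι ι ℂ) * Matrix.diagonal (RCLike.ofReal ∘ f) *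
    star (hX.eigenvectorUnitary : Matrix ι ι ℂ)

lemma specConj_self {X : Matrix ι ι ℂ} (hX : X.IsHermitian) :
    specConj hX hX.eigenvalues = X :=
  hX.spectral_theorem.symm

lemma specConj_mul {X : Matrix ι ι ℂ} (hX : X.IsHermitian) (f g : ι → ℝ) :
    specConj hX f * specConj hX g = specConj hX (fun i => f i * g i) := by
  have hU : star (hX.eigenvectorUnitary : Matrix ι ι ℂ) *
      (hX.eigenvectorUnitary : Matrix ι ι ℂ) = 1 :=
    Unitary.coe_star_mul_self hX.eigenvectorUnitary
  simp only [specConj, Matrix.mul_assoc]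
  rw [← Matrix.mul_assoc (star _) _, hU, Matrix.one_mul,
    ← Matrix.mul_assoc (Matrix.diagonal _) _, Matrix.diagonal_mul_diagonal,
    show (fun i => (RCLike.ofReal ∘ f) i * (RCLike.ofReal ∘ g) i)
        = (RCLike.ofReal ∘ fun i => f i * g i : ι → ℂ)
      from funext fun i => by simp]

lemma specConj_posSemidef {X : Matrix ι ι ℂ} (hX : X.IsHermitian) {f : ι → ℝ}
    (hf : ∀ i, 0 ≤ f i) : (specConj hX f).PosSemidef := by
  have h := (Matrix.PosSemidef.diagonal
      (fun i => Complex.zero_le_real.mpr (hf i) : ∀ i, (0:ℂ) ≤ (RCLike.ofReal ∘ f) i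
    )).mul_mul_conjTranspose_same (hX.eigenvectorUnitary : Matrix ι ι ℂ)
  rwa [specConj, Matrix.star_eq_conjTranspose]

lemma specConj_trace_re {X : Matrix ι ι ℂ} (hX : X.IsHermitian) (f : ι → ℝ) :
    (specConj hX f).trace.re = ∑ i, f i := by
  have hU : star (hX.eigenvectorUnitary : Matrix ι ι ℂ) *
      (hX.eigenvectorUnitary : Matrix ι ι ℂ) = 1 :=
    Unitary.coe_star_mul_self hX.eigenvectorUnitary
  rw [specConj, Matrix.trace_mul_comm, ← Matrix.mul_assoc, hU, Matrix.one_mul,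
    Matrix.trace_diagonal]
  rw [Complex.re_sum]
  simp

lemma specConj_sub {X : Matrix ι ι ℂ} (hX : X.IsHermitian) (f g : ι → ℝ) :
    specConj hX f - specConj hX g = specConj hX (f - g) := by
  simp only [specConj, ← Matrix.sub_mul, ← Matrix.mul_sub, Matrix.diagonal_sub,
    show (fun i => (RCLike.ofReal ∘ f) i - (RCLike.ofReal ∘ g) i)
        = (RCLike.ofReal ∘ (f - g) : ι → ℂ)
      from funext fun i => by simp]

lemma specConj_neg {X : Matrix ι ι ℂ} (hX : X.IsHermitian) (f : ι → ℝ) :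
    - specConj hX f = specConj hX (-f) := by
  rw [specConj, specConj,
    show (RCLike.ofReal ∘ (-f) : ι → ℂ) = fun i => -((RCLike.ofReal ∘ f) i)
      from funext fun i => by simp,
    ← Matrix.diagonal_neg, Matrix.mul_neg, Matrix.neg_mul]

lemma trace_re_nonneg {M : Matrix ι ι ℂ} (hM : M.PosSemidef) : 0 ≤ M.trace.re := by
  have h : ∀ i, 0 ≤ (M i i).re := by
    intro i
    have h2 : (0 : ℂ) ≤ M i i := by
      exact hM.diag_nonneg
    exact (Complex.le_def.mp h2).1
  rw [Matrix.trace, Complex.re_sum]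
  exact Finset.sum_nonneg fun i _ => h i

lemma specConj_mul_self_mul {X : Matrix ι ι ℂ} (hX : X.IsHermitian) (f g : ι → ℝ) :
    specConj hX f * X * specConj hX g
      = specConj hX (fun i => f i * (hX.eigenvalues i * g i)) := by
  conv_lhs => lhs; rhs; rw [← specConj_self hX]
  rw [specConj_mul hX, specConj_mul hX]
  exact congrArg (specConj hX) (funext fun i => by ring)

/-- Jordan decomposition of a Hermitian matrix, with trace-norm identity and the
projection onto the negative part. -/
lemma jordan {X : Matrix ι ι ℂ} (hX : X.IsHermitian) :
    ∃ P Q : Matrix ι ι ℂ, P.PosSemidef ∧ Q.PosSemidef ∧ X = P - Q ∧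
      traceNorm X = P.trace.re + Q.trace.re ∧
      ∃ J : Matrix ι ι ℂ, J.IsHermitian ∧ J * J = J ∧ J * X * J = -Q := by
  refine ⟨specConj hX (fun i => max (hX.eigenvalues i) 0),
    specConj hX (fun i => max (-hX.eigenvalues i) 0),
    specConj_posSemidef hX (fun i => le_max_right _ _),
    specConj_posSemidef hX (fun i => le_max_right _ _), ?_, ?_, ?_⟩
  · rw [specConj_sub hX]
    rw [show ((fun i => max (hX.eigenvalues i) 0) - fun i => max (-hX.eigenvalues i) 0)
        = hX.eigenvalues from funext fun i => by
      rcases le_total (hX.eigenvalues i) 0 with h | h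
      · simp [max_eq_right h, max_eq_left (neg_nonneg.mpr h)]
      · simp [max_eq_left h, max_eq_right (neg_nonpos.mpr h)]]
    exact (specConj_self hX).symm
  · have hB : (specConj hX fun i => |hX.eigenvalues i|).PosSemidef :=
      specConj_posSemidef hX fun i => abs_nonneg _
    have hsq : (specConj hX fun i => |hX.eigenvalues i|) ^ 2 = Xᴴ * X := by
      rw [pow_two, specConj_mul hX, hX.eq]
      rw [show (fun i => |hX.eigenvalues i| * |hX.eigenvalues i|)
          = fun i => hX.eigenvalues i * hX.eigenvalues i from
        funext fun i => abs_mul_abs_self _]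
      rw [← specConj_mul hX, specConj_self hX]
    rw [traceNorm_eq_of_sq hB hsq, specConj_trace_re, specConj_trace_re, specConj_trace_re,
      ← Finset.sum_add_distrib]
    exact Finset.sum_congr rfl fun i _ => by
      rw [max_zero_add_max_neg_zero_eq_abs_self]
  · refine ⟨specConj hX (fun i => if hX.eigenvalues i < 0 then 1 else 0),
      (specConj_posSemidef hX fun i => by positivity).1, ?_, ?_⟩
    · rw [specConj_mul hX]
      exact congrArg (specConj hX) (funext fun i => by
        by_cases h : hX.eigenvalues i < 0 <;> simp [h])
    · rw [specConj_mul_self_mul hX, specConj_neg hX]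
      exact congrArg (specConj hX) (funext fun i => by
        by_cases h : hX.eigenvalues i < 0
        · simp [h, max_eq_left (neg_nonneg.mpr h.le)]
        · simp [h, max_eq_right (neg_nonpos.mpr (not_lt.mp h))])

/-- The key trace-norm bound: for positive semidefinite `P` and `Q`,
`‖P − Q‖_tr ≤ tr P + tr Q`. -/
lemma traceNorm_sub_le_trace {P Q : Matrix ι ι ℂ} (hP : P.PosSemidef) (hQ : Q.PosSemidef) :
    traceNorm (P - Q) ≤ P.trace.re + Q.trace.re := by
  obtain ⟨A, B, hA, hB, hD, htn, J, hJH, hJJ, hJX⟩ := jordan (hP.1.sub hQ.1)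
  have htr : A.trace.re - B.trace.re = P.trace.re - Q.trace.re := by
    have h1 : A.trace - B.trace = P.trace - Q.trace := by
      rw [← Matrix.trace_sub, ← Matrix.trace_sub, ← hD]
    have := congrArg Complex.re h1
    simpa [Complex.sub_re] using this
  have hJPJ : (0:ℝ) ≤ (J * P * J).trace.re := by
    have : (J * P * Jᴴ).PosSemidef := hP.mul_mul_conjTranspose_same J
    rw [hJH.eq] at this
    exact trace_re_nonneg this
  have hone : ((1 : Matrix ι ι ℂ) - J) * ((1 : Matrix ι ι ℂ) - J) = 1 - J := by
    rw [Matrix.sub_mul, Matrix.one_mul, Matrix.mul_sub, Matrix.mul_one, hJJ]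
    abel
  have honeH : ((1 : Matrix ι ι ℂ) - J)ᴴ = 1 - J := by
    rw [Matrix.conjTranspose_sub, Matrix.conjTranspose_one, hJH.eq]
  have hR : (0:ℝ) ≤ (((1 : Matrix ι ι ℂ) - J) * Q * (1 - J)).trace.re := by
    have : (((1 : Matrix ι ι ℂ) - J) * Q * ((1 : Matrix ι ι ℂ) - J)ᴴ).PosSemidef :=
      hQ.mul_mul_conjTranspose_same _
    rw [honeH] at this
    exact trace_re_nonneg this
  have hJQ : (J * Q * J).trace = (J * Q).trace := by
    rw [Matrix.trace_mul_comm, ← Matrix.mul_assoc, hJJ]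
  have hRtr : (((1 : Matrix ι ι ℂ) - J) * Q * (1 - J)).trace
      = Q.trace - (J * Q * J).trace := by
    rw [Matrix.trace_mul_comm, ← Matrix.mul_assoc, hone, Matrix.sub_mul, Matrix.one_mul,
      Matrix.trace_sub, hJQ]
  have hJQJ : (J * Q * J).trace.re ≤ Q.trace.re := by
    have h2 := hR
    rw [hRtr] at h2
    simp only [Complex.sub_re] at h2
    linarith
  have hBle : B.trace.re ≤ Q.trace.re := by
    have hB' : B = J * Q * J - J * P * J := by
      have h2 : J * (P - Q) * J = J * P * J - J * Q * J := by
        rw [Matrix.mul_sub, Matrix.sub_mul]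
      rw [h2] at hJX
      have h3 := congrArg Neg.neg hJX
      rw [neg_neg] at h3
      rw [← h3]
      abel
    have h4 := congrArg (fun M : Matrix ι ι ℂ => M.trace.re) hB'
    simp only [Matrix.trace_sub, Complex.sub_re] at h4
    linarith
  rw [htn]
  linarith

lemma posSemidef_smul {M : Matrix ι ι ℂ} (hM : M.PosSemidef) {c : ℝ} (hc : 0 ≤ c) :
    ((c : ℂ) • M).PosSemidef := by
  refine ⟨?_, fun x => ?_⟩
  · rw [Matrix.IsHermitian, Matrix.conjTranspose_smul, hM.1]
    congr 1
    simp [Complex.star_def, Complex.conj_ofReal]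
  · exact (hM.smul (Complex.zero_le_real.mpr hc)).2 x

lemma posSemidef_sum {κ : Type*} (s : Finset κ) (f : κ → Matrix ι ι ℂ)
    (h : ∀ i ∈ s, (f i).PosSemidef) : (∑ i ∈ s, f i).PosSemidef := by
  classical
  induction s using Finset.induction with
  | empty => simpa using Matrix.PosSemidef.zero
  | @insert a s ha ih =>
    rw [Finset.sum_insert ha]
    exact (h a (Finset.mem_insert_self a s)).add
      (ih fun i hi => h i (Finset.mem_insert_of_mem hi))

end Aux

section Kron

lemma kron_conjTranspose {a b : ℕ} (A : Matrix (Fin a) (Fin a) ℂ)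
    (B : Matrix (Fin b) (Fin b) ℂ) : (A ⊗ₖ B)ᴴ = Aᴴ ⊗ₖ Bᴴ := by
  ext p q
  simp [Matrix.conjTranspose_apply, mul_comm]

lemma kron_posSemidef {a b : ℕ} {A : Matrix (Fin a) (Fin a) ℂ}
    {B : Matrix (Fin b) (Fin b) ℂ} (hA : A.PosSemidef) (hB : B.PosSemidef) :
    (A ⊗ₖ B).PosSemidef := by
  exact hA.kronecker hB

lemma kron_sub {a b : ℕ} (A A' : Matrix (Fin a) (Fin a) ℂ)
    (B : Matrix (Fin b) (Fin b) ℂ) : (A - A') ⊗ₖ B = A ⊗ₖ B - A' ⊗ₖ B := by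
  ext p q
  simp [Matrix.sub_apply, sub_mul]

end Kron

section Maps

lemma tensorId_kron {m k n : ℕ} (Φ : Matrix (Fin m) (Fin m) ℂ →ₗ[ℂ] Matrix (Fin k) (Fin k) ℂ)
    (ρ : Matrix (Fin m) (Fin m) ℂ) (τ : Matrix (Fin n) (Fin n) ℂ) :
    tensorId n Φ (ρ ⊗ₖ τ) = (Φ ρ) ⊗ₖ τ := by
  ext p q
  show Φ (Matrix.of fun i j => (ρ ⊗ₖ τ) (i, p.2) (j, q.2)) p.1 q.1 = _
  have h : (Matrix.of fun i j => (ρ ⊗ₖ τ) (i, p.2) (j, q.2)) = τ p.2 q.2 • ρ := by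
    ext i j
    simp [mul_comm]
  rw [h, map_smul]
  simp [mul_comm]

lemma isPositiveMap_of_cp {m k : ℕ}
    {Φ : Matrix (Fin m) (Fin m) ℂ →ₗ[ℂ] Matrix (Fin k) (Fin k) ℂ}
    (h : IsCompletelyPositive Φ) : IsPositiveMap Φ := by
  intro X hX
  have h1 := h 1 (X.submatrix (Equiv.prodUnique (Fin m) (Fin 1))
    (Equiv.prodUnique (Fin m) (Fin 1))) (hX.submatrix _)
  have h2 : tensorId 1 Φ (X.submatrix (Equiv.prodUnique (Fin m) (Fin 1))
        (Equiv.prodUnique (Fin m) (Fin 1)))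
      = (Φ X).submatrix (Equiv.prodUnique (Fin k) (Fin 1))
        (Equiv.prodUnique (Fin k) (Fin 1)) := by
    ext p q
    rfl
  rw [h2] at h1
  exact (Matrix.posSemidef_submatrix_equiv (Equiv.prodUnique (Fin k) (Fin 1))).mp h1

end Maps

/-- Separable states give no advantage in channel discrimination: for channels
`Φ₀, Φ₁` and a separable bipartite state `σ`,
`‖((Φ₀ − Φ₁) ⊗ id_n)[σ]‖_tr ≤ sup { ‖Φ₀[τ] − Φ₁[τ]‖_tr : τ a state on ℂ^m }`. -/
theorem separable_states_no_advantage
    {m k n : ℕ} (Φ₀ Φ₁ : Matrix (Fin m) (Fin m) ℂ →ₗ[ℂ] Matrix (Fin k) (Fin k) ℂ)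
    (h₀ : IsChannel Φ₀) (h₁ : IsChannel Φ₁)
    (σ : Matrix (Fin m × Fin n) (Fin m × Fin n) ℂ) (hσ : IsSeparable σ) :
    traceNorm (tensorId n (Φ₀ - Φ₁) σ) ≤
      sSup {x : ℝ | ∃ τ : Matrix (Fin m) (Fin m) ℂ, IsState τ ∧
        x = traceNorm (Φ₀ τ - Φ₁ τ)} := by
  obtain ⟨N, p, ρ, τ, hp, hps, hρ, hτ, hσeq⟩ := hσ
  have hpos₀ := isPositiveMap_of_cp h₀.1
  have hpos₁ := isPositiveMap_of_cp h₁.1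
  have hHerm : ∀ i, (Φ₀ (ρ i) - Φ₁ (ρ i)).IsHermitian := fun i =>
    ((hpos₀ _ (hρ i).1).1).sub ((hpos₁ _ (hρ i).1).1)
  choose P Q hP hQ hdec htn hJ using fun i => jordan (hHerm i)
  clear hJ
  have himg : tensorId n (Φ₀ - Φ₁) σ
      = (∑ i, (p i : ℂ) • (P i ⊗ₖ τ i)) - ∑ i, (p i : ℂ) • (Q i ⊗ₖ τ i) := by
    rw [hσeq, map_sum, ← Finset.sum_sub_distrib]
    refine Finset.sum_congr rfl fun i _ => ?_
    rw [map_smul, tensorId_kron, LinearMap.sub_apply, hdec i, kron_sub, smul_sub]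
  have hSPp : (∑ i, (p i : ℂ) • (P i ⊗ₖ τ i)).PosSemidef := posSemidef_sum _ _ fun i _ =>
    posSemidef_smul (kron_posSemidef (hP i) (hτ i).1) (hp i)
  have hSQp : (∑ i, (p i : ℂ) • (Q i ⊗ₖ τ i)).PosSemidef := posSemidef_sum _ _ fun i _ =>
    posSemidef_smul (kron_posSemidef (hQ i) (hτ i).1) (hp i)
  have htrace : ∀ R : Fin N → Matrix (Fin k) (Fin k) ℂ,
      (∑ i, (p i : ℂ) • (R i ⊗ₖ τ i)).trace.re = ∑ i, p i * (R i).trace.re := by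
    intro R
    rw [Matrix.trace_sum, Complex.re_sum]
    refine Finset.sum_congr rfl fun i _ => ?_
    rw [Matrix.trace_smul, Matrix.trace_kronecker, (hτ i).2, mul_one, smul_eq_mul]
    exact Complex.re_ofReal_mul _ _
  have hbdd : BddAbove {x : ℝ | ∃ τ' : Matrix (Fin m) (Fin m) ℂ, IsState τ' ∧
      x = traceNorm (Φ₀ τ' - Φ₁ τ')} := by
    refine ⟨2, fun x hx => ?_⟩
    obtain ⟨τ', hτ', rfl⟩ := hx
    have hb := traceNorm_sub_le_trace (hpos₀ _ hτ'.1) (hpos₁ _ hτ'.1)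
    rw [h₀.2, h₁.2, hτ'.2] at hb
    simp only [Complex.one_re] at hb
    linarith
  have hle : ∀ i, traceNorm (Φ₀ (ρ i) - Φ₁ (ρ i)) ≤
      sSup {x : ℝ | ∃ τ' : Matrix (Fin m) (Fin m) ℂ, IsState τ' ∧
        x = traceNorm (Φ₀ τ' - Φ₁ τ')} :=
    fun i => le_csSup hbdd ⟨ρ i, hρ i, rfl⟩
  rw [himg]
  calc traceNorm ((∑ i, (p i : ℂ) • (P i ⊗ₖ τ i)) - ∑ i, (p i : ℂ) • (Q i ⊗ₖ τ i))
      ≤ (∑ i, (p i : ℂ) • (P i ⊗ₖ τ i)).trace.re + (∑ i, (p i : ℂ) • (Q i ⊗ₖ τ i)).trace.re :=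
        traceNorm_sub_le_trace hSPp hSQp
    _ = ∑ i, p i * ((P i).trace.re + (Q i).trace.re) := by
        rw [htrace P, htrace Q, ← Finset.sum_add_distrib]
        exact Finset.sum_congr rfl fun i _ => by ring
    _ = ∑ i, p i * traceNorm (Φ₀ (ρ i) - Φ₁ (ρ i)) :=
        Finset.sum_congr rfl fun i _ => by rw [htn i]
    _ ≤ ∑ i, p i * sSup {x : ℝ | ∃ τ' : Matrix (Fin m) (Fin m) ℂ, IsState τ' ∧
          x = traceNorm (Φ₀ τ' - Φ₁ τ')} :=
        Finset.sum_le_sum fun i _ => mul_le_mul_of_nonneg_left (hle i) (hp i)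
    _ = sSup {x : ℝ | ∃ τ' : Matrix (Fin m) (Fin m) ℂ, IsState τ' ∧
          x = traceNorm (Φ₀ τ' - Φ₁ τ')} := by
        rw [← Finset.sum_mul, hps, one_mul]


end ChannelDiscrimination
end

section
/- Let Φ be a positive, trace-preserving super-operator from m×m matrices to k×k matrices, and let σ be a separable bipartite state on ℂ^m ⊗ ℂ^n. Then (Φ ⊗ id_n)[σ] is positive semidefinite and ‖(Φ ⊗ id_n)[σ]‖_tr = 1; equivalently, the generalized negativity N_Φ(σ) = (‖(Φ ⊗ id_n)[σ]‖_tr − 1)/2 equals 0. -/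
open scoped Kronecker ComplexOrder Matrix

namespace ChannelDiscrimination

lemma kron_conjTranspose_aux {m n : ℕ} (A : Matrix (Fin m) (Fin m) ℂ)
    (B : Matrix (Fin n) (Fin n) ℂ) : (A ⊗ₖ B)ᴴ = Aᴴ ⊗ₖ Bᴴ := by
  ext p q
  simp [Matrix.conjTranspose_apply, Matrix.kroneckerMap_apply, mul_comm]

lemma kron_posSemidef_aux {m n : ℕ} {A : Matrix (Fin m) (Fin m) ℂ}
    {B : Matrix (Fin n) (Fin n) ℂ} (hA : A.PosSemidef) (hB : B.PosSemidef) :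
    (A ⊗ₖ B).PosSemidef := by
  exact hA.kronecker hB

open scoped MatrixOrder in
lemma sqrt_psd_eq_self_aux {ι : Type*} [Fintype ι] [DecidableEq ι]
    {A : Matrix ι ι ℂ} (hA : A.PosSemidef) :
    ((Matrix.posSemidef_conjTranspose_mul_self A).1.eigenvectorUnitary.1 *
      Matrix.diagonal (((↑) : ℝ → ℂ) ∘ (√·) ∘ (Matrix.posSemidef_conjTranspose_mul_self A).1.eigenvalues) *
      (star (Matrix.posSemidef_conjTranspose_mul_self A).1.eigenvectorUnitary :
        Matrix ι ι ℂ)) = A := by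
  have hB := (Matrix.posSemidef_conjTranspose_mul_self A).1
  have h1 : ((Matrix.posSemidef_conjTranspose_mul_self A).1.eigenvectorUnitary.1 *
      Matrix.diagonal (((↑) : ℝ → ℂ) ∘ (√·) ∘ (Matrix.posSemidef_conjTranspose_mul_self A).1.eigenvalues) *
      (star (Matrix.posSemidef_conjTranspose_mul_self A).1.eigenvectorUnitary :
        Matrix ι ι ℂ)) = cfc Real.sqrt (Aᴴ * A) := by
    rw [hB.cfc_eq]; rfl
  have hA0 : 0 ≤ A := hA.nonneg
  have hAA : 0 ≤ A * A := by
    have := (Matrix.posSemidef_conjTranspose_mul_self A).nonneg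
    rwa [hA.isHermitian.eq] at this
  rw [h1, hA.isHermitian.eq, ← cfcₙ_eq_cfc (f := Real.sqrt) (a := A * A) (by fun_prop) (by simp), ← CFC.sqrt_eq_real_sqrt (A * A) hAA,
    CFC.sqrt_mul_self A hA0]

lemma smul_posSemidef_aux {ι : Type*} [Fintype ι] {A : Matrix ι ι ℂ}
    (hA : A.PosSemidef) {c : ℝ} (hc : 0 ≤ c) : ((c : ℂ) • A).PosSemidef := by
  exact hA.smul (a := (c : ℂ)) (by exact_mod_cast hc)

lemma sum_posSemidef_aux {ι κ : Type*} [Fintype ι] [Fintype κ]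
    (f : κ → Matrix ι ι ℂ) (hf : ∀ i, (f i).PosSemidef) :
    (∑ i, f i).PosSemidef :=
  Finset.sum_induction f _ (fun _ _ ha hb => ha.add hb) (Matrix.PosSemidef.zero)
    (fun i _ => hf i)

lemma tensorId_kron_aux {m k n : ℕ}
    (Φ : Matrix (Fin m) (Fin m) ℂ →ₗ[ℂ] Matrix (Fin k) (Fin k) ℂ)
    (A : Matrix (Fin m) (Fin m) ℂ) (B : Matrix (Fin n) (Fin n) ℂ) :
    tensorId n Φ (A ⊗ₖ B) = Φ A ⊗ₖ B := by
  ext p q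
  show Φ (Matrix.of fun i j => (A ⊗ₖ B) (i, p.2) (j, q.2)) p.1 q.1 = _
  have h : (Matrix.of fun i j => (A ⊗ₖ B) (i, p.2) (j, q.2)) = B p.2 q.2 • A := by
    ext i j; simp [Matrix.kroneckerMap_apply, mul_comm]
  rw [h, map_smul]
  simp [Matrix.kroneckerMap_apply, mul_comm]

/-- If `Φ` is positive and trace-preserving and `σ` is a separable bipartite state,
then `(Φ ⊗ id_n)[σ]` is positive semidefinite and `‖(Φ ⊗ id_n)[σ]‖_tr = 1`;
equivalently, the generalized negativity `(‖(Φ ⊗ id_n)[σ]‖_tr − 1)/2` equals `0`. -/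
theorem generalized_negativity_eq_zero_of_separable
    {m k n : ℕ} (Φ : Matrix (Fin m) (Fin m) ℂ →ₗ[ℂ] Matrix (Fin k) (Fin k) ℂ)
    (hpos : IsPositiveMap Φ) (hTP : IsTracePreserving Φ)
    (σ : Matrix (Fin m × Fin n) (Fin m × Fin n) ℂ) (hσ : IsSeparable σ) :
    (tensorId n Φ σ).PosSemidef ∧ traceNorm (tensorId n Φ σ) = 1 ∧
      (traceNorm (tensorId n Φ σ) - 1) / 2 = 0 := by
  obtain ⟨N, p, ρ, τ, hp, hsum, hρ, hτ, hσeq⟩ := hσ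
  have hT : tensorId n Φ σ = ∑ i, (p i : ℂ) • (Φ (ρ i) ⊗ₖ τ i) := by
    rw [hσeq, map_sum]
    simp_rw [map_smul, tensorId_kron_aux]
  have hPSD : (tensorId n Φ σ).PosSemidef := by
    rw [hT]
    exact sum_posSemidef_aux _ fun i =>
      smul_posSemidef_aux (kron_posSemidef_aux (hpos _ (hρ i).1) (hτ i).1) (hp i)
  have htr : (tensorId n Φ σ).trace = 1 := by
    rw [hT, Matrix.trace_sum]
    have h1 : ∀ i : Fin N, ((p i : ℂ) • (Φ (ρ i) ⊗ₖ τ i)).trace = (p i : ℂ) := by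
      intro i
      rw [Matrix.trace_smul, Matrix.trace_kronecker, hTP, (hρ i).2, (hτ i).2]
      simp
    rw [Finset.sum_congr rfl fun i _ => h1 i, ← Complex.ofReal_sum, hsum,
      Complex.ofReal_one]
  have hnorm : traceNorm (tensorId n Φ σ) = 1 := by
    rw [traceNorm, sqrt_psd_eq_self_aux hPSD, htr, Complex.one_re]
  exact ⟨hPSD, hnorm, by rw [hnorm]; norm_num⟩

end ChannelDiscrimination
end

section
/- Let Ω be a nonzero positive super-operator from m×m matrices to k×k matrices, and let λ = sup { Tr(Ω[τ]) : τ a state on ℂ^m } (a strictly positive real). Define the super-operator Φ from m×m matrices to (k+1)×(k+1) matrices by letting Φ[X] have the matrix Ω[X]/λ as its top-left k×k block, the scalar Tr(X) − Tr(Ω[X])/λ in the bottom-right corner entry, and zeros elsewhere. Then Φ is positive and trace-preserving, and for every bipartite state ρ on ℂ^m ⊗ ℂ^n, if (Ω ⊗ id_n)[ρ] is not positive semidefinite then (Φ ⊗ id_n)[ρ] is not positive semidefinite. -/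
open scoped Kronecker ComplexOrder Matrix

namespace ChannelDiscrimination

section Aux

open Matrix

variable {ι : Type*} [Fintype ι] [DecidableEq ι]

lemma star_single (u : ι) (c : ℂ) : star (Pi.single u c : ι → ℂ) = Pi.single u (star c) := by
  ext b
  by_cases h : b = u <;> simp [Pi.single_apply, h]

lemma psd_smul_real {A : Matrix ι ι ℂ} (hA : A.PosSemidef)
    {r : ℝ} (hr : 0 ≤ r) : ((r : ℂ) • A).PosSemidef := by
  refine Matrix.PosSemidef.of_dotProduct_mulVec_nonneg ?_ fun x => ?_
  · show ((r:ℂ) • A)ᴴ = _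
    rw [conjTranspose_smul, hA.1, Complex.star_def, Complex.conj_ofReal]
  · rw [smul_mulVec, dotProduct_smul, smul_eq_mul]
    exact mul_nonneg (Complex.zero_le_real.mpr hr) (hA.dotProduct_mulVec_nonneg x)

lemma psd_diag_nonneg {A : Matrix ι ι ℂ} (hA : A.PosSemidef) (i : ι) : 0 ≤ A i i := by
  have h := hA.dotProduct_mulVec_nonneg (Pi.single i 1)
  rw [star_single] at h
  simpa [single_dotProduct] using h

lemma psd_diag_im {A : Matrix ι ι ℂ} (hA : A.PosSemidef) (i : ι) : (A i i).im = 0 :=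
  ((Complex.nonneg_iff.mp (psd_diag_nonneg hA i)).2).symm

lemma psd_trace_eq {A : Matrix ι ι ℂ} (hA : A.PosSemidef) :
    A.trace = ((A.trace.re : ℝ) : ℂ) := by
  have him : A.trace.im = 0 := by
    rw [Matrix.trace, Complex.im_sum]
    exact Finset.sum_eq_zero fun i _ => psd_diag_im hA i
  apply Complex.ext <;> simp [him]

lemma psd_trace_re_nonneg {A : Matrix ι ι ℂ} (hA : A.PosSemidef) : 0 ≤ A.trace.re := by
  rw [Matrix.trace, Complex.re_sum]
  exact Finset.sum_nonneg fun i _ => (Complex.nonneg_iff.mp (psd_diag_nonneg hA i)).1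

lemma psd_abs_entry_le_trace_re {A : Matrix ι ι ℂ} (hA : A.PosSemidef) (i j : ι) :
    ‖A i j‖ ≤ A.trace.re := by
  have hdiag : ∀ u, 0 ≤ (A u u).re := fun u => (Complex.nonneg_iff.mp (psd_diag_nonneg hA u)).1
  have htr : ∀ u, (A u u).re ≤ A.trace.re := by
    intro u
    rw [Matrix.trace, Complex.re_sum]
    exact Finset.single_le_sum (fun v _ => hdiag v) (Finset.mem_univ u)
  by_cases hij : i = j
  · subst hij
    rw [← Complex.re_eq_norm.mpr (psd_diag_nonneg hA i)]
    exact htr i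
  · have hsum2 : (A i i).re + (A j j).re ≤ A.trace.re := by
      rw [Matrix.trace, Complex.re_sum]
      have h := Finset.sum_le_sum_of_subset_of_nonneg (Finset.subset_univ ({i, j} : Finset ι))
        (fun w _ _ => hdiag w)
      rwa [Finset.sum_pair hij] at h
    by_cases ha : A i j = 0
    · simp only [ha, norm_zero]
      exact le_trans (hdiag i) (htr i)
    set a := A i j with haa
    set t : ℝ := ‖a‖ with htt
    have ht : 0 < t := by simpa [htt] using ha
    have hAji : A j i = (starRingEnd ℂ) a := by
      have := congrFun (congrFun hA.1 j) i
      simpa [conjTranspose_apply, haa] using this.symm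
    set x : ι → ℂ := (t:ℂ) • (Pi.single i 1 : ι → ℂ)
      + (-(starRingEnd ℂ) a) • (Pi.single j 1 : ι → ℂ) with hx
    have hq := hA.dotProduct_mulVec_nonneg x
    have hQF : star x ⬝ᵥ A *ᵥ x
        = (t:ℂ)^2 * A i i + (t:ℂ)^2 * A j j - 2*(t:ℂ)^3 := by
      have hma : a * (starRingEnd ℂ) a = (t:ℂ)^2 := by
        rw [Complex.mul_conj, Complex.normSq_eq_norm_sq]
        push_cast [htt]
        ring
      simp only [hx, star_add, star_smul, star_single, star_one, mulVec_add, mulVec_smul,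
        add_dotProduct, dotProduct_add, smul_dotProduct, dotProduct_smul, single_dotProduct,
        mulVec_single_one, col_apply, one_mul, mul_one, smul_eq_mul, Complex.star_def, Complex.conj_ofReal,
        map_neg, Complex.conj_conj, hAji, ← haa]
      linear_combination (A j j - 2*(t:ℂ)) * hma
    rw [hQF] at hq
    have hre := (Complex.nonneg_iff.mp hq).1
    have hre' : ((t:ℂ)^2 * A i i + (t:ℂ)^2 * A j j - 2*(t:ℂ)^3).re
        = t^2*(A i i).re + t^2*(A j j).re - 2*t^3 := by
      have e1 : (t:ℂ)^2 = ((t^2:ℝ):ℂ) := by push_cast; ring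
      have e2 : 2*(t:ℂ)^3 = ((2*t^3:ℝ):ℂ) := by push_cast; ring
      rw [e1, e2, Complex.sub_re, Complex.add_re, Complex.re_ofReal_mul, Complex.re_ofReal_mul,
        Complex.ofReal_re]
    rw [hre'] at hre
    nlinarith [ht, mul_pos ht ht, hsum2]

lemma psd_eq_zero_of_trace_re {A : Matrix ι ι ℂ} (hA : A.PosSemidef)
    (h : A.trace.re = 0) : A = 0 := by
  ext i j
  have h1 := psd_abs_entry_le_trace_re hA i j
  rw [h] at h1
  simpa using le_antisymm h1 (norm_nonneg _)

variable {k : ℕ} (M : Matrix (Fin k) (Fin k) ℂ) (c : ℂ)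

@[simp] lemma pad1_cc (i j : Fin k) : pad1 M c i.castSucc j.castSucc = M i j := by
  simp [pad1]
@[simp] lemma pad1_ll : pad1 M c (Fin.last k) (Fin.last k) = c := by simp [pad1]
@[simp] lemma pad1_cl (i : Fin k) : pad1 M c i.castSucc (Fin.last k) = 0 := by simp [pad1]
@[simp] lemma pad1_lc (j : Fin k) : pad1 M c (Fin.last k) j.castSucc = 0 := by simp [pad1]

lemma pad1_trace : (pad1 M c).trace = M.trace + c := by
  simp [Matrix.trace, Matrix.diag, Fin.sum_univ_castSucc]

lemma pad1_posSemidef {M : Matrix (Fin k) (Fin k) ℂ} (hM : M.PosSemidef) {c : ℂ}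
    (hc : 0 ≤ c) : (pad1 M c).PosSemidef := by
  have hcim : c.im = 0 := (Complex.nonneg_iff.mp hc).2.symm
  refine Matrix.PosSemidef.of_dotProduct_mulVec_nonneg ?_ ?_
  · ext a b
    rw [conjTranspose_apply]
    induction a using Fin.lastCases with
    | last =>
      induction b using Fin.lastCases with
      | last =>
        simp only [pad1_ll, Complex.star_def]
        exact Complex.conj_eq_iff_im.mpr hcim
      | cast j => simp
    | cast i =>
      induction b using Fin.lastCases with
      | last => simp
      | cast j =>
        simp only [pad1_cc, Complex.star_def]
        exact congrFun (congrFun hM.1 _) _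
  · intro x
    have h1 : ∀ i : Fin k, (pad1 M c *ᵥ x) i.castSucc = (M *ᵥ fun j => x j.castSucc) i := by
      intro i
      simp [mulVec, dotProduct, Fin.sum_univ_castSucc]
    have h2 : (pad1 M c *ᵥ x) (Fin.last k) = c * x (Fin.last k) := by
      simp [mulVec, dotProduct, Fin.sum_univ_castSucc]
    calc (0:ℂ) ≤ (star fun j => x (Fin.castSucc j)) ⬝ᵥ (M *ᵥ fun j => x j.castSucc)
          + star (x (Fin.last k)) * (c * x (Fin.last k)) := by
          refine add_nonneg (hM.dotProduct_mulVec_nonneg _) ?_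
          have hcs : star (x (Fin.last k)) * (c * x (Fin.last k))
              = c * (star (x (Fin.last k)) * x (Fin.last k)) := by ring
          rw [hcs]
          exact mul_nonneg hc (star_mul_self_nonneg _)
      _ = star x ⬝ᵥ (pad1 M c *ᵥ x) := by
          rw [dotProduct, dotProduct, Fin.sum_univ_castSucc, h2]
          simp only [Pi.star_apply, h1]

lemma hermitian_decomp {d : ℕ} {H : Matrix (Fin d) (Fin d) ℂ} (hH : H.IsHermitian) :
    ∃ P N : Matrix (Fin d) (Fin d) ℂ, P.PosSemidef ∧ N.PosSemidef ∧ H = P - N := by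
  have hspec := hH.spectral_theorem
  set U := (hH.eigenvectorUnitary : Matrix (Fin d) (Fin d) ℂ) with hU
  have hdiag : ∀ (f : Fin d → ℝ), (0 ≤ f) →
      (U * diagonal (fun i => ((f i : ℝ) : ℂ)) * Uᴴ).PosSemidef := by
    intro f hf
    refine Matrix.PosSemidef.mul_mul_conjTranspose_same ?_ U
    exact Matrix.PosSemidef.diagonal fun i => Complex.zero_le_real.mpr (hf i)
  refine ⟨U * diagonal (fun i => ((max (hH.eigenvalues i) 0 : ℝ) : ℂ)) * Uᴴ,
    U * diagonal (fun i => ((max (-(hH.eigenvalues i)) 0 : ℝ) : ℂ)) * Uᴴ,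
    hdiag _ (fun i => le_max_right _ _), hdiag _ (fun i => le_max_right _ _), ?_⟩
  rw [← Matrix.sub_mul, ← Matrix.mul_sub, Matrix.diagonal_sub]
  have hfun : (fun i => ((max (hH.eigenvalues i) 0 : ℝ) : ℂ) - ((max (-(hH.eigenvalues i)) 0 : ℝ) : ℂ))
      = fun i => ((hH.eigenvalues i : ℝ) : ℂ) := by
    funext i
    rw [← Complex.ofReal_sub, max_zero_sub_max_neg_zero_eq_self]
  simp only [hfun]
  conv_lhs => rw [hspec]
  rfl

lemma matrix_psd_combo {d : ℕ} (X : Matrix (Fin d) (Fin d) ℂ) :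
    ∃ P₁ N₁ P₂ N₂ : Matrix (Fin d) (Fin d) ℂ, P₁.PosSemidef ∧ N₁.PosSemidef ∧
      P₂.PosSemidef ∧ N₂.PosSemidef ∧ X = (P₁ - N₁) + Complex.I • (P₂ - N₂) := by
  have hstar2 : star ((2:ℂ)⁻¹) = (2:ℂ)⁻¹ := by simp
  have hH : (((2:ℂ)⁻¹) • (X + Xᴴ)).IsHermitian := by
    unfold Matrix.IsHermitian
    rw [conjTranspose_smul, conjTranspose_add, conjTranspose_conjTranspose,
      hstar2, add_comm]
  have hK : (((2:ℂ)⁻¹) • (Complex.I • (Xᴴ - X))).IsHermitian := by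
    unfold Matrix.IsHermitian
    rw [conjTranspose_smul, conjTranspose_smul, conjTranspose_sub,
      conjTranspose_conjTranspose, hstar2, Complex.star_def, Complex.conj_I,
      neg_smul, ← smul_neg, neg_sub]
  obtain ⟨P₁, N₁, h1, h2, hHeq⟩ := hermitian_decomp hH
  obtain ⟨P₂, N₂, h3, h4, hKeq⟩ := hermitian_decomp hK
  refine ⟨P₁, N₁, P₂, N₂, h1, h2, h3, h4, ?_⟩
  rw [← hHeq, ← hKeq, smul_smul, smul_smul]
  have hI : Complex.I * (2:ℂ)⁻¹ * Complex.I = -(2:ℂ)⁻¹ := by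
    linear_combination (2:ℂ)⁻¹ * Complex.I_mul_I
  rw [hI]
  module

end Aux

/-- From a nonzero positive super-operator `Ω` one obtains a positive trace-preserving
super-operator `Φ[X] = pad1 (Ω[X]/λ) (Tr X − Tr(Ω[X])/λ)` (with
`λ = sup {Tr(Ω[τ]) : τ a state}` strictly positive) detecting at least the same
states as `Ω`. -/
theorem positive_map_upgrades_to_positive_trace_preserving
    {m k : ℕ} (Ω : Matrix (Fin m) (Fin m) ℂ →ₗ[ℂ] Matrix (Fin k) (Fin k) ℂ)
    (hΩpos : IsPositiveMap Ω) (hΩne : Ω ≠ 0)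
    (lam : ℝ)
    (hlam : lam = sSup {x : ℝ | ∃ τ : Matrix (Fin m) (Fin m) ℂ, IsState τ ∧
      (x : ℂ) = (Ω τ).trace})
    (Φ : Matrix (Fin m) (Fin m) ℂ →ₗ[ℂ] Matrix (Fin (k + 1)) (Fin (k + 1)) ℂ)
    (hΦ : ∀ X : Matrix (Fin m) (Fin m) ℂ,
      Φ X = pad1 ((lam : ℂ)⁻¹ • Ω X) (X.trace - (Ω X).trace / (lam : ℂ))) :
    0 < lam ∧ IsPositiveMap Φ ∧ IsTracePreserving Φ ∧
      ∀ (n : ℕ) (ρ : Matrix (Fin m × Fin n) (Fin m × Fin n) ℂ), IsState ρ →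
        ¬ (tensorId n Ω ρ).PosSemidef → ¬ (tensorId n Φ ρ).PosSemidef := by
  classical
  set S : Set ℝ := {x : ℝ | ∃ τ : Matrix (Fin m) (Fin m) ℂ, IsState τ ∧
      (x : ℂ) = (Ω τ).trace} with hSdef
  have hBdd : BddAbove S := by
    refine ⟨∑ i : Fin m, ∑ j : Fin m,
      ‖(Ω (Matrix.single i j 1)).trace‖, ?_⟩
    rintro x ⟨τ, ⟨hτpsd, hτtr⟩, hx⟩
    have hτ1 : τ.trace.re = 1 := by rw [hτtr]; simp
    have hexp : (Ω τ).trace = ∑ i : Fin m, ∑ j : Fin m,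
        τ i j * (Ω (Matrix.single i j 1)).trace := by
      conv_lhs => rw [Matrix.matrix_eq_sum_single τ]
      rw [map_sum, Matrix.trace_sum]
      refine Finset.sum_congr rfl fun i _ => ?_
      rw [map_sum, Matrix.trace_sum]
      refine Finset.sum_congr rfl fun j _ => ?_
      have hs : Matrix.single i j (τ i j) = τ i j • Matrix.single i j 1 := by
        rw [Matrix.smul_single, smul_eq_mul, mul_one]
      rw [hs, map_smul, Matrix.trace_smul, smul_eq_mul]
    have hx1 : x ≤ ‖(Ω τ).trace‖ := by
      calc x ≤ |x| := le_abs_self x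
        _ = ‖(x:ℂ)‖ := by simp
        _ = _ := by rw [hx]
    refine le_trans hx1 ?_
    rw [hexp]
    refine le_trans (norm_sum_le _ _) (Finset.sum_le_sum fun i _ => ?_)
    refine le_trans (norm_sum_le _ _) (Finset.sum_le_sum fun j _ => ?_)
    rw [norm_mul]
    have hb : ‖τ i j‖ ≤ 1 := by
      have := psd_abs_entry_le_trace_re hτpsd i j
      rwa [hτ1] at this
    calc ‖τ i j‖ * ‖(Ω (Matrix.single i j 1)).trace‖
        ≤ 1 * ‖(Ω (Matrix.single i j 1)).trace‖ :=
          mul_le_mul_of_nonneg_right hb (norm_nonneg _)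
      _ = _ := one_mul _
  obtain ⟨P, hPpsd, hΩP⟩ : ∃ P : Matrix (Fin m) (Fin m) ℂ, P.PosSemidef ∧ Ω P ≠ 0 := by
    by_contra hcon
    push_neg at hcon
    apply hΩne
    apply LinearMap.ext
    intro X
    obtain ⟨P₁, N₁, P₂, N₂, h1, h2, h3, h4, hX⟩ := matrix_psd_combo X
    rw [hX]
    simp [map_add, map_sub, map_smul, hcon _ h1, hcon _ h2, hcon _ h3, hcon _ h4]
  have hPne : P ≠ 0 := by
    rintro rfl
    exact hΩP (map_zero Ω)
  have mkstate : ∀ (Q : Matrix (Fin m) (Fin m) ℂ) (r : ℝ), Q.PosSemidef → Q.trace = (r:ℂ) →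
      0 < r → IsState (((r⁻¹ : ℝ) : ℂ) • Q) := by
    intro Q r hQ hr ht
    refine ⟨psd_smul_real hQ (inv_nonneg.mpr ht.le), ?_⟩
    rw [Matrix.trace_smul, hr, smul_eq_mul, ← Complex.ofReal_mul,
      inv_mul_cancel₀ ht.ne', Complex.ofReal_one]
  have htP : 0 < P.trace.re := by
    rcases (psd_trace_re_nonneg hPpsd).lt_or_eq with h | h
    · exact h
    · exact absurd (psd_eq_zero_of_trace_re hPpsd h.symm) hPne
  set τ₀ := ((P.trace.re⁻¹ : ℝ):ℂ) • P with hτ₀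
  have hτ₀s : IsState τ₀ := mkstate P P.trace.re hPpsd (psd_trace_eq hPpsd) htP
  have hΩτ₀psd : (Ω τ₀).PosSemidef := hΩpos _ hτ₀s.1
  have hΩτ₀ne : Ω τ₀ ≠ 0 := by
    rw [hτ₀, map_smul]
    intro hzero
    rcases smul_eq_zero.mp hzero with hcz | hz
    · exact (by simpa using inv_ne_zero htP.ne' : ((P.trace.re⁻¹:ℝ):ℂ) ≠ 0) hcz
    · exact hΩP hz
  have hx0 : 0 < (Ω τ₀).trace.re := by
    rcases (psd_trace_re_nonneg hΩτ₀psd).lt_or_eq with h | h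
    · exact h
    · exact absurd (psd_eq_zero_of_trace_re hΩτ₀psd h.symm) hΩτ₀ne
  have hmemS : ∀ (τ : Matrix (Fin m) (Fin m) ℂ), IsState τ → (Ω τ).trace.re ∈ S := by
    intro τ hτ
    exact ⟨τ, hτ, (psd_trace_eq (hΩpos _ hτ.1)).symm⟩
  have hlampos : 0 < lam := by
    rw [hlam]
    exact lt_of_lt_of_le hx0 (le_csSup hBdd (hmemS _ hτ₀s))
  have hlamne : (lam:ℂ) ≠ 0 := Complex.ofReal_ne_zero.mpr hlampos.ne'
  have hkey : ∀ X : Matrix (Fin m) (Fin m) ℂ, X.PosSemidef →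
      (Ω X).trace.re ≤ lam * X.trace.re := by
    intro X hX
    rcases (psd_trace_re_nonneg hX).lt_or_eq with h | h
    · have hτs := mkstate X X.trace.re hX (psd_trace_eq hX) h
      have hle : (Ω (((X.trace.re⁻¹ : ℝ):ℂ) • X)).trace.re ≤ lam :=
        hlam ▸ le_csSup hBdd (hmemS _ hτs)
      have heq : (Ω (((X.trace.re⁻¹ : ℝ):ℂ) • X)).trace.re
          = X.trace.re⁻¹ * (Ω X).trace.re := by
        rw [map_smul, Matrix.trace_smul, smul_eq_mul, Complex.re_ofReal_mul]
      rw [heq] at hle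
      calc (Ω X).trace.re = X.trace.re * (X.trace.re⁻¹ * (Ω X).trace.re) := by
            field_simp
        _ ≤ X.trace.re * lam := mul_le_mul_of_nonneg_left hle h.le
        _ = lam * X.trace.re := mul_comm _ _
    · rw [psd_eq_zero_of_trace_re hX h.symm]
      simp
  have hΦpos : IsPositiveMap Φ := by
    intro X hX
    rw [hΦ X]
    have hxt := psd_trace_eq hX
    have hot := psd_trace_eq (hΩpos _ hX)
    set xr := X.trace.re with hxr
    set sr := (Ω X).trace.re with hsr
    rw [hxt, hot]
    have hcr : ((xr:ℝ):ℂ) - ((sr:ℝ):ℂ)/(lam:ℂ) = (((xr - sr/lam : ℝ)):ℂ) := by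
      push_cast
      ring
    rw [hcr]
    refine pad1_posSemidef ?_ ?_
    · have hinv : ((lam:ℂ))⁻¹ = (((lam⁻¹ : ℝ)):ℂ) := by push_cast; ring
      rw [hinv]
      exact psd_smul_real (hΩpos _ hX) (inv_nonneg.mpr hlampos.le)
    · rw [Complex.zero_le_real]
      have hk := hkey X hX
      rw [← hxr, ← hsr] at hk
      have h2 : sr / lam ≤ xr := by
        rw [div_le_iff₀ hlampos]
        linarith
      linarith
  have hΦtr : IsTracePreserving Φ := by
    intro X
    rw [hΦ X, pad1_trace, Matrix.trace_smul, smul_eq_mul]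
    ring
  refine ⟨hlampos, hΦpos, hΦtr, ?_⟩
  intro n ρ hρ hΩρ hΦρ
  apply hΩρ
  set e : Fin k × Fin n → Fin (k+1) × Fin n := fun p => (p.1.castSucc, p.2) with he
  have hsub : (tensorId n Φ ρ).submatrix e e = ((lam:ℂ))⁻¹ • tensorId n Ω ρ := by
    ext p q
    show Φ (Matrix.of fun i j => ρ (i, p.2) (j, q.2)) p.1.castSucc q.1.castSucc
        = (lam:ℂ)⁻¹ * (Ω (Matrix.of fun i j => ρ (i, p.2) (j, q.2)) p.1 q.1)
    rw [hΦ, pad1_cc]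
    rfl
  have h1 := hΦρ.submatrix e
  rw [hsub] at h1
  have h2 : tensorId n Ω ρ = (lam:ℂ) • (((lam:ℂ))⁻¹ • tensorId n Ω ρ) := by
    rw [smul_smul, mul_inv_cancel₀ hlamne, one_smul]
  rw [h2]
  exact psd_smul_real h1 hlampos.le


end ChannelDiscrimination
end
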